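/- Suppose for every ordinal 1 ≤ β < α, every game tree with taboos S, every A ∈ Σ⁰_β([S]), and every k there is a k-covering of S unraveling A, and suppose moreover every open subset of the branches of any game tree with taboos can be unraveled by a k-covering for every k. Then for every game tree with taboos T, every A ∈ Σ⁰_α([T]), and every k, there is a k-covering of T that unravels A. -/

import Mathlib

universe u v

/-- A game tree: a nonempty set of finite sequences closed under initial segments. -/
def IsGameTree {X : Type*} (T : Set (List X)) : Prop :=
  T.Nonempty ∧ ∀ ⦃p q : List X⦄, q ∈ T → p <+: q → p ∈ T

/-- A terminal position: a position with no proper extension in the tree. -/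
def IsTerminal {X : Type*} (T : Set (List X)) (p : List X) : Prop :=
  p ∈ T ∧ ∀ a : X, p ++ [a] ∉ T

/-- A pruned game tree has no terminal positions. -/
def IsPruned {X : Type*} (T : Set (List X)) : Prop :=
  ∀ p ∈ T, ∃ a : X, p ++ [a] ∈ T

/-- The game subtree at a position `p`. -/
def subtreeAt {X : Type*} (T : Set (List X)) (p : List X) : Set (List X) :=
  {q | q ∈ T ∧ (q <+: p ∨ p <+: q)}

/-- The initial segment of length `n` of an infinite sequence. -/
def prefixFn {X : Type*} (x : ℕ → X) (n : ℕ) : List X :=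
  List.ofFn fun i : Fin n => x i

/-- The set of infinite branches through a tree. -/
def body {X : Type*} (T : Set (List X)) : Set (ℕ → X) :=
  {x | ∀ n, prefixFn x n ∈ T}

/-- `Turn pl n` holds when it is player `pl`'s turn to move at a position of length `n`
(`true` is player I, moving at even stages, `false` is player II). -/
def Turn (pl : Bool) (n : ℕ) : Prop := if pl then Even n else Odd n

/-- A position is consistent with a strategy `σ` for player `pl` if all the moves of
player `pl` along it follow `σ`. -/
def PosConsistent {X : Type*} (pl : Bool) (σ : List X → X) (p : List X) : Prop :=
  ∀ (k : ℕ) (h : k < p.length), Turn pl k → p.get ⟨k, h⟩ = σ (p.take k)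

/-- An infinite branch is consistent with a strategy `σ` for player `pl` if all the moves of
player `pl` along it follow `σ`. -/
def BranchConsistent {X : Type*} (pl : Bool) (σ : List X → X) (x : ℕ → X) : Prop :=
  ∀ k : ℕ, Turn pl k → x k = σ (prefixFn x k)

/-- `σ` is a (legal) strategy for player `pl` in `T`: at any nonterminal position of `T`
consistent with `σ` where it is `pl`'s turn, it produces a legal move. -/
def IsStrategy {X : Type*} (T : Set (List X)) (pl : Bool) (σ : List X → X) : Prop :=
  ∀ p ∈ T, ¬ IsTerminal T p → Turn pl p.length → PosConsistent pl σ p →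
    p ++ [σ p] ∈ T


/-- A game tree with taboos: a game tree together with a partition of its terminal
positions into taboos for player I and taboos for player II. -/
structure TabooTree (X : Type*) where
  T : Set (List X)
  isTree : IsGameTree T
  tabooI : Set (List X)
  tabooII : Set (List X)
  tabooI_terminal : ∀ p ∈ tabooI, IsTerminal T p
  tabooII_terminal : ∀ p ∈ tabooII, IsTerminal T p
  taboo_disjoint : Disjoint tabooI tabooII
  taboo_cover : ∀ p, IsTerminal T p → p ∈ tabooI ∪ tabooII

/-- `σ` is a winning strategy for player I in the game with payoff `A` on the tree `T`
whose taboos for player II are `tabooII`: every finite play (terminal position)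
consistent with `σ` is a taboo for II, and every infinite play consistent with `σ` is in `A`. -/
def WinsI {X : Type*} (T tabooII : Set (List X)) (A : Set (ℕ → X)) (σ : List X → X) : Prop :=
  IsStrategy T true σ ∧
  (∀ p, IsTerminal T p → PosConsistent true σ p → p ∈ tabooII) ∧
  (∀ x ∈ body T, BranchConsistent true σ x → x ∈ A)

/-- `τ` is a winning strategy for player II: every finite play consistent with `τ` is a
taboo for I, and every infinite play consistent with `τ` is outside `A`. -/
def WinsII {X : Type*} (T tabooI : Set (List X)) (A : Set (ℕ → X)) (τ : List X → X) : Prop :=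
  IsStrategy T false τ ∧
  (∀ p, IsTerminal T p → PosConsistent false τ p → p ∈ tabooI) ∧
  (∀ x ∈ body T, BranchConsistent false τ x → x ∉ A)

/-- Determinacy of the game on tree `T` with taboos `tI`, `tII` and payoff `A`. -/
def DeterminedOn {X : Type*} (T tI tII : Set (List X)) (A : Set (ℕ → X)) : Prop :=
  (∃ σ, WinsI T tII A σ) ∨ (∃ τ, WinsII T tI A τ)

/-- Determinacy of the game with taboos `G(A; M)`. -/
def Determined {X : Type*} (M : TabooTree X) (A : Set (ℕ → X)) : Prop :=
  DeterminedOn M.T M.tabooI M.tabooII A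


/-- The tree topology on infinite sequences: the product topology of the discrete topology. -/
def treeTopology (X : Type*) : TopologicalSpace (ℕ → X) :=
  @Pi.topologicalSpace ℕ (fun _ => X) (fun _ => ⊥)

/-- `A` is (relatively) open in the branch space `[T]`. -/
def RelOpen {X : Type*} (T : Set (List X)) (A : Set (ℕ → X)) : Prop :=
  ∃ U : Set (ℕ → X), @IsOpen _ (treeTopology X) U ∧ A = U ∩ body T

/-- `A` is (relatively) closed in the branch space `[T]`. -/
def RelClosed {X : Type*} (T : Set (List X)) (A : Set (ℕ → X)) : Prop :=
  ∃ C : Set (ℕ → X), @IsClosed _ (treeTopology X) C ∧ A = C ∩ body T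

/-- `A` is (relatively) clopen in the branch space `[T]`. -/
def RelClopen {X : Type*} (T : Set (List X)) (A : Set (ℕ → X)) : Prop :=
  RelOpen T A ∧ RelClosed T A


/-- The additive Borel classes `Σ⁰_o` of the tree topology: `Σ⁰_o` contains the open sets,
and countable unions of sets whose complements are in `Σ⁰_β` for ordinals `1 ≤ β < o`. -/
inductive SigmaMem (X : Type*) : Ordinal.{0} → Set (ℕ → X) → Prop where
  | isOpen (o : Ordinal.{0}) (A : Set (ℕ → X)) :
      @IsOpen _ (treeTopology X) A → SigmaMem X o A
  | iUnion (o : Ordinal.{0}) (f : ℕ → Set (ℕ → X)) (β : ℕ → Ordinal.{0}) :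
      (∀ n, 1 ≤ β n) → (∀ n, β n < o) → (∀ n, SigmaMem X (β n) (f n)ᶜ) →
      SigmaMem X o (⋃ n, f n)


/-- A play of a game tree: either a finite play (a terminal position) or an infinite play. -/
inductive Play (X : Type*) where
  | fin : List X → Play X
  | inf : (ℕ → X) → Play X

/-- `x` is a play of the tree `T`. -/
def IsPlay {X : Type*} (T : Set (List X)) : Play X → Prop
  | .fin p => IsTerminal T p
  | .inf x => x ∈ body T

/-- A play is consistent with the strategy `σ` of player `pl`. -/
def PlayConsistent {X : Type*} (pl : Bool) (σ : List X → X) : Play X → Prop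
  | .fin p => PosConsistent pl σ p
  | .inf x => BranchConsistent pl σ x

/-- A play is a taboo for player `pl`. -/
def PlayTabooFor {X : Type*} (M : TabooTree X) (pl : Bool) : Play X → Prop
  | .fin p => p ∈ (if pl then M.tabooI else M.tabooII)
  | .inf _ => False

/-- A play is an initial segment of another. -/
def Play.le {X : Type*} : Play X → Play X → Prop
  | .fin p, .fin q => p <+: q
  | .fin p, .inf x => p = prefixFn x p.length
  | .inf _, .fin _ => False
  | .inf x, .inf y => x = y

/-- The map on infinite sequences induced by a monotone, length-preserving map on positions. -/
noncomputable def bodyMap {X Y : Type*} [Nonempty X] (π : List Y → List X)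
    (x : ℕ → Y) : ℕ → X :=
  fun n => (π (prefixFn x (n + 1))).getD n (Classical.arbitrary X)

/-- The map on plays induced by a position map. -/
noncomputable def Play.map {X Y : Type*} [Nonempty X] (π : List Y → List X) :
    Play Y → Play X
  | .fin p => .fin (π p)
  | .inf x => .inf (bodyMap π x)


/-- A covering of the game tree with taboos `M` by the game tree with taboos `Tc`:
a position map `π` (monotone, length-preserving, and pulling taboos back to taboos for the
same player) and a strategy map `φ` (mapping strategies to strategies for the same player,
with finite dependence on its argument) satisfying the lifting condition. -/
structure Covering {X Y : Type*} [Nonempty X] (Tc : TabooTree Y) (M : TabooTree X) where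
  π : List Y → List X
  π_maps : ∀ p ∈ Tc.T, π p ∈ M.T
  π_mono : ∀ p q : List Y, p ∈ Tc.T → q ∈ Tc.T → p <+: q → π p <+: π q
  π_len : ∀ p ∈ Tc.T, (π p).length = p.length
  π_tabooI : ∀ p ∈ Tc.T, π p ∈ M.tabooI → p ∈ Tc.tabooI
  π_tabooII : ∀ p ∈ Tc.T, π p ∈ M.tabooII → p ∈ Tc.tabooII
  φ : Bool → (List Y → Y) → (List X → X)
  φ_strategy : ∀ pl σ, IsStrategy Tc.T pl σ → IsStrategy M.T pl (φ pl σ)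
  φ_local : ∀ (pl : Bool) (n : ℕ) (σ σ' : List Y → Y),
      (∀ p : List Y, p.length < n → σ p = σ' p) →
      ∀ q : List X, q.length < n → φ pl σ q = φ pl σ' q
  lifting : ∀ (pl : Bool) (σ : List Y → Y), IsStrategy Tc.T pl σ →
      ∀ x : Play X, IsPlay M.T x → PlayConsistent pl (φ pl σ) x →
        ∃ xt : Play Y, IsPlay Tc.T xt ∧ PlayConsistent pl σ xt ∧
          Play.le (Play.map π xt) x ∧
          (Play.map π xt = x ∨ PlayTabooFor Tc pl xt)


/-- A `k`-covering: the two trees (and their taboos) agree on all positions of length ≤ `k`,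
and the position and strategy maps are the identity up to level `k`. -/
def IsKCovering {X : Type*} [Nonempty X] {Tc M : TabooTree X} (k : ℕ)
    (C : Covering Tc M) : Prop :=
  (∀ p : List X, p.length ≤ k → (p ∈ Tc.T ↔ p ∈ M.T)) ∧
  (∀ p : List X, p.length ≤ k → (p ∈ Tc.tabooI ↔ p ∈ M.tabooI)) ∧
  (∀ p : List X, p.length ≤ k → (p ∈ Tc.tabooII ↔ p ∈ M.tabooII)) ∧
  (∀ p ∈ Tc.T, p.length ≤ k → C.π p = p) ∧
  (∀ (pl : Bool) (σ : List X → X) (p : List X), p.length < k → C.φ pl σ p = σ p)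


/-- A covering unravels `A` if the preimage of `A` under the induced map on branches
is clopen in the branch space of the covering tree. -/
def Unravels {X Y : Type*} [Nonempty X] {Tc : TabooTree Y} {M : TabooTree X}
    (C : Covering Tc M) (A : Set (ℕ → X)) : Prop :=
  RelClopen Tc.T (bodyMap C.π ⁻¹' A ∩ body Tc.T)


set_option linter.unusedSectionVars false
section Aux

open List

variable {X : Type u} [Nonempty X]

theorem length_prefixFn (x : ℕ → X) (n : ℕ) : (prefixFn x n).length = n := by
  simp [prefixFn]

theorem get_prefixFn (x : ℕ → X) {n i : ℕ} (h : i < n) :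
    (prefixFn x n).get ⟨i, by simp [prefixFn, h]⟩ = x i := by
  simp [prefixFn]

theorem getElem_prefixFn (x : ℕ → X) {n i : ℕ} (h : i < (prefixFn x n).length) :
    (prefixFn x n)[i] = x i := by
  simp [prefixFn]

theorem take_prefixFn (x : ℕ → X) {m n : ℕ} (h : m ≤ n) :
    (prefixFn x n).take m = prefixFn x m := by
  apply List.ext_getElem
  · simp [prefixFn]; omega
  · intro i h1 h2
    simp only [List.getElem_take]
    rw [getElem_prefixFn, getElem_prefixFn]

theorem prefixFn_prefix (x : ℕ → X) {m n : ℕ} (h : m ≤ n) :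
    prefixFn x m <+: prefixFn x n := by
  rw [← take_prefixFn x h]; exact List.take_prefix _ _

theorem prefixFn_succ (x : ℕ → X) (n : ℕ) :
    prefixFn x (n + 1) = prefixFn x n ++ [x n] := by
  apply List.ext_getElem
  · simp [prefixFn]
  · intro i h1 h2
    rw [getElem_prefixFn]
    rcases Nat.lt_or_ge i n with h | h
    · rw [List.getElem_append_left (by simp [length_prefixFn, h])]
      rw [getElem_prefixFn]
    · have : i = n := by simp [prefixFn] at h1; omega
      subst this
      rw [List.getElem_append_right (by simp [length_prefixFn])]
      simp [length_prefixFn]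

theorem eq_prefixFn_iff {x : ℕ → X} {p : List X} {n : ℕ} :
    p = prefixFn x n ↔ p.length = n ∧ ∀ i (h : i < p.length), p[i] = x i := by
  constructor
  · rintro rfl
    exact ⟨length_prefixFn x n, fun i h => getElem_prefixFn x h⟩
  · rintro ⟨hl, h⟩
    apply List.ext_getElem (by simp [length_prefixFn, hl])
    intro i h1 h2
    rw [h i h1, getElem_prefixFn]

theorem prefix_of_mem_body {T : Set (List X)} {x : ℕ → X} (hx : x ∈ body T) (n : ℕ) :
    prefixFn x n ∈ T := hx n

theorem nil_mem_of_tree {T : Set (List X)} (hT : IsGameTree T) : [] ∈ T := by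
  obtain ⟨w, hw⟩ := hT.1
  exact hT.2 hw List.nil_prefix

/-- a proper prefix of a tree element is not terminal -/
theorem not_terminal_of_proper {T : Set (List X)} (hT : IsGameTree T) {p q : List X}
    (hq : q ∈ T) (hpq : p <+: q) (hl : p.length < q.length) : ¬ IsTerminal T p := by
  rintro ⟨-, h⟩
  apply h (q[p.length])
  have h1 : p = q.take p.length := by
    rw [List.prefix_iff_eq_take] at hpq; exact hpq
  have h2 : p ++ [q[p.length]] = q.take (p.length + 1) := by
    rw [List.take_succ, List.getElem?_eq_getElem hl]
    simp [← h1]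
  rw [h2]
  exact hT.2 hq (List.take_prefix _ _)

theorem prefixFn_not_terminal {T : Set (List X)} (hT : IsGameTree T) {x : ℕ → X}
    (hx : x ∈ body T) (n : ℕ) : ¬ IsTerminal T (prefixFn x n) := by
  apply not_terminal_of_proper hT (hx (n+1)) (prefixFn_prefix x (Nat.le_succ n))
  simp [length_prefixFn]

theorem posConsistent_congr {pl : Bool} {σ σ' : List X → X} {p : List X}
    (h : ∀ r : List X, r.length < p.length → σ r = σ' r) :
    PosConsistent pl σ p ↔ PosConsistent pl σ' p := by
  unfold PosConsistent
  refine forall_congr' fun i => forall_congr' fun hi => forall_congr' fun ht => ?_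
  rw [h (p.take i) (by simp [List.length_take]; omega)]

/-- bundle of tree-map properties used for `bodyMap` computations. -/
structure IsTreeMap (g : List X → List X) (T2 T1 : Set (List X)) : Prop where
  maps : ∀ p ∈ T2, g p ∈ T1
  mono : ∀ p q, p ∈ T2 → q ∈ T2 → p <+: q → g p <+: g q
  len : ∀ p ∈ T2, (g p).length = p.length

theorem Covering.isTreeMap {Tc M : TabooTree X} (C : Covering Tc M) :
    IsTreeMap C.π Tc.T M.T := ⟨C.π_maps, C.π_mono, C.π_len⟩

theorem prefixFn_bodyMap {g : List X → List X} {T2 T1 : Set (List X)}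
    (hg : IsTreeMap g T2 T1) {y : ℕ → X} (hy : y ∈ body T2) (l : ℕ) :
    prefixFn (bodyMap g y) l = g (prefixFn y l) := by
  symm
  rw [eq_prefixFn_iff]
  have hlen : (g (prefixFn y l)).length = l := by rw [hg.len _ (hy l), length_prefixFn]
  refine ⟨hlen, fun i hi => ?_⟩
  rw [hlen] at hi
  have hpre : g (prefixFn y (i+1)) <+: g (prefixFn y l) :=
    hg.mono _ _ (hy (i+1)) (hy l) (prefixFn_prefix y hi)
  have hlen2 : (g (prefixFn y (i+1))).length = i + 1 := by
    rw [hg.len _ (hy (i+1)), length_prefixFn]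
  show _ = bodyMap g y i
  unfold bodyMap
  rw [List.getD_eq_getElem _ _ (by omega)]
  exact (List.IsPrefix.getElem hpre _).symm

theorem bodyMap_mem_body {g : List X → List X} {T2 T1 : Set (List X)}
    (hg : IsTreeMap g T2 T1) {y : ℕ → X} (hy : y ∈ body T2) :
    bodyMap g y ∈ body T1 := by
  intro l
  rw [prefixFn_bodyMap hg hy l]
  exact hg.maps _ (hy l)

theorem bodyMap_comp {g : List X → List X} {h : List X → List X} {T2 T1 : Set (List X)}
    (hg : IsTreeMap g T2 T1) {y : ℕ → X} (hy : y ∈ body T2) :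
    bodyMap (fun p => h (g p)) y = bodyMap h (bodyMap g y) := by
  funext n
  show (h (g (prefixFn y (n+1)))).getD n _ = (h (prefixFn (bodyMap g y) (n+1))).getD n _
  rw [prefixFn_bodyMap hg hy]

end Aux

section Topo
set_option linter.unusedSectionVars false

variable {X : Type u} [Nonempty X]

theorem isOpen_prefixFn_eq (l : ℕ) (p : List X) :
    @IsOpen _ (treeTopology X) {y : ℕ → X | prefixFn y l = p} := by
  letI : TopologicalSpace X := ⊥
  haveI : DiscreteTopology X := ⟨rfl⟩
  show IsOpen {y : ℕ → X | prefixFn y l = p}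
  by_cases hl : p.length = l
  · have heq : {y : ℕ → X | prefixFn y l = p} =
        ⋂ i : Fin l, (fun y : ℕ → X => y i) ⁻¹' {p[(i : ℕ)]'(by omega)} := by
      ext y
      simp only [Set.mem_setOf_eq, Set.mem_iInter, Set.mem_preimage, Set.mem_singleton_iff]
      constructor
      · rintro rfl i; exact (getElem_prefixFn y (by simpa [length_prefixFn] using i.isLt)).symm
      · intro h
        apply List.ext_getElem (by simp [length_prefixFn, hl])
        intro i h1 h2
        rw [getElem_prefixFn, h ⟨i, by simp [length_prefixFn] at h1; omega⟩]
    rw [heq]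
    exact isOpen_iInter_of_finite fun i =>
      (continuous_apply (i : ℕ)).isOpen_preimage _ (isOpen_discrete _)
  · have heq : {y : ℕ → X | prefixFn y l = p} = ∅ := by
      ext y; simp only [Set.mem_setOf_eq, Set.mem_empty_iff_false, iff_false]
      intro h; apply hl; rw [← h, length_prefixFn]
    rw [heq]; exact isOpen_empty

theorem continuous_of_prefix_dep (g : (ℕ → X) → (ℕ → X))
    (h : ∀ (y z : ℕ → X) (n : ℕ), prefixFn y (n+1) = prefixFn z (n+1) → g y n = g z n) :
    @Continuous _ _ (treeTopology X) (treeTopology X) g := by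
  letI : TopologicalSpace X := ⊥
  haveI : DiscreteTopology X := ⟨rfl⟩
  show Continuous g
  apply continuous_pi
  intro n
  rw [continuous_def]
  intro s _
  have heq : (fun y => g y n) ⁻¹' s = ⋃ p ∈ {p : List X | ∃ z, prefixFn z (n+1) = p ∧ g z n ∈ s},
      {y : ℕ → X | prefixFn y (n+1) = p} := by
    ext y
    simp only [Set.mem_preimage, Set.mem_iUnion, Set.mem_setOf_eq]
    constructor
    · intro hy; exact ⟨prefixFn y (n+1), ⟨y, rfl, hy⟩, rfl⟩
    · rintro ⟨p, ⟨z, hz, hzs⟩, hy⟩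
      rwa [h y z n (by rw [hy, hz])]
  rw [heq]
  exact isOpen_biUnion fun p _ => isOpen_prefixFn_eq (n+1) p

theorem continuous_bodyMap (g : List X → List X) :
    @Continuous _ _ (treeTopology X) (treeTopology X) (bodyMap g) :=
  continuous_of_prefix_dep _ fun y z n h => by unfold bodyMap; rw [h]

theorem SigmaMem.preimage {g : (ℕ → X) → (ℕ → X)}
    (hg : @Continuous _ _ (treeTopology X) (treeTopology X) g)
    {o : Ordinal.{0}} {B : Set (ℕ → X)} (hB : SigmaMem X o B) :
    SigmaMem X o (g ⁻¹' B) := by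
  induction hB with
  | isOpen o A hA =>
      exact SigmaMem.isOpen o _ (@IsOpen.preimage _ _ (treeTopology X) (treeTopology X) g hg _ hA)
  | iUnion o f β h1 h2 h3 ih =>
      rw [Set.preimage_iUnion]
      exact SigmaMem.iUnion o _ β h1 h2 fun n => by
        rw [← Set.preimage_compl]; exact ih n

theorem RelClopen.diff {T : Set (List X)} {D : Set (ℕ → X)} (h : RelClopen T D) :
    RelClopen T (body T \ D) := by
  letI : TopologicalSpace X := ⊥
  obtain ⟨⟨U, hU, hUD⟩, ⟨F, hF, hFD⟩⟩ := h
  constructor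
  · refine ⟨Fᶜ, ?_, ?_⟩
    · show IsOpen Fᶜ
      exact (show IsClosed F from hF).isOpen_compl
    · rw [hFD]; ext y; simp; tauto
  · refine ⟨Uᶜ, ?_, ?_⟩
    · show IsClosed Uᶜ
      exact (show IsOpen U from hU).isClosed_compl
    · rw [hUD]; ext y; simp; tauto

theorem relClopen_pullback {g : List X → List X} {T2 T1 : Set (List X)}
    (hg : IsTreeMap g T2 T1) {D : Set (ℕ → X)} (h : RelClopen T1 D) :
    RelClopen T2 (bodyMap g ⁻¹' D ∩ body T2) := by
  letI : TopologicalSpace X := ⊥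
  obtain ⟨⟨U, hU, hUD⟩, ⟨F, hF, hFD⟩⟩ := h
  have hc : Continuous (bodyMap g) := continuous_bodyMap g
  constructor
  · refine ⟨bodyMap g ⁻¹' U, hc.isOpen_preimage _ hU, ?_⟩
    ext y
    simp only [Set.mem_inter_iff, Set.mem_preimage, hUD]
    exact and_congr_left fun hy => and_iff_left (bodyMap_mem_body hg hy)
  · refine ⟨bodyMap g ⁻¹' F, (show IsClosed F from hF).preimage hc, ?_⟩
    ext y
    simp only [Set.mem_inter_iff, Set.mem_preimage, hFD]
    exact and_congr_left fun hy => and_iff_left (bodyMap_mem_body hg hy)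

end Topo

section Plays
set_option linter.unusedSectionVars false

variable {X : Type u} [Nonempty X]

theorem Play.le_refl (w : Play X) : Play.le w w := by
  cases w with
  | fin p => exact List.prefix_refl p
  | inf y => rfl

theorem Play.le_trans {u v w : Play X} (h1 : Play.le u v) (h2 : Play.le v w) :
    Play.le u w := by
  cases u with
  | fin p =>
    cases v with
    | fin q =>
      cases w with
      | fin r => exact List.IsPrefix.trans h1 h2
      | inf y =>
        show p = prefixFn y p.length
        have hq : q = prefixFn y q.length := h2
        have h1' : p <+: q := h1
        rw [eq_prefixFn_iff]
        refine ⟨rfl, fun i hi => ?_⟩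
        rw [h1'.getElem hi]
        rw [List.getElem_of_eq hq, getElem_prefixFn]
    | inf y =>
      cases w with
      | fin r => exact absurd h2 (by simp [Play.le])
      | inf z => show p = prefixFn z p.length; rwa [← h2]
  | inf y =>
    cases v with
    | fin q => exact absurd h1 (by simp [Play.le])
    | inf z =>
      cases w with
      | fin r => exact absurd h2 (by simp [Play.le])
      | inf w' => show y = w'; rw [h1]; exact h2

theorem play_map_mono {g : List X → List X} {T2 T1 : Set (List X)}
    (hg : IsTreeMap g T2 T1) {w w' : Play X}
    (hw : ∀ p, w = Play.fin p → p ∈ T2)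
    (hw' : IsPlay T2 w')
    (h : Play.le w w') : Play.le (Play.map g w) (Play.map g w') := by
  cases w with
  | fin p =>
    cases w' with
    | fin q =>
      exact hg.mono p q (hw p rfl) hw'.1 h
    | inf y =>
      show g p = prefixFn (bodyMap g y) (g p).length
      have hp : p = prefixFn y p.length := h
      rw [prefixFn_bodyMap hg hw', hg.len p (hw p rfl), ← hp]
  | inf y =>
    cases w' with
    | fin q => exact absurd h (by simp [Play.le])
    | inf z => show bodyMap g y = bodyMap g z; rw [show y = z from h]

theorem Play.map_eq_fin {g : List X → List X} {w : Play X} {q : List X}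
    (h : Play.map g w = Play.fin q) : ∃ p, w = Play.fin p ∧ g p = q := by
  cases w with
  | fin p => exact ⟨p, rfl, by injection h⟩
  | inf y => exact absurd h (by simp [Play.map])

/-- Composition of coverings. -/
noncomputable def Covering.comp {T2 T1 T0 : TabooTree X}
    (C₂ : Covering T2 T1) (C₁ : Covering T1 T0) : Covering T2 T0 where
  π := fun p => C₁.π (C₂.π p)
  π_maps := fun p hp => C₁.π_maps _ (C₂.π_maps p hp)
  π_mono := fun p q hp hq hpq =>
    C₁.π_mono _ _ (C₂.π_maps p hp) (C₂.π_maps q hq) (C₂.π_mono p q hp hq hpq)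
  π_len := fun p hp => by rw [C₁.π_len _ (C₂.π_maps p hp), C₂.π_len p hp]
  π_tabooI := fun p hp h => C₂.π_tabooI p hp (C₁.π_tabooI _ (C₂.π_maps p hp) h)
  π_tabooII := fun p hp h => C₂.π_tabooII p hp (C₁.π_tabooII _ (C₂.π_maps p hp) h)
  φ := fun pl σ => C₁.φ pl (C₂.φ pl σ)
  φ_strategy := fun pl σ hσ => C₁.φ_strategy pl _ (C₂.φ_strategy pl σ hσ)
  φ_local := fun pl n σ σ' h q hq =>
    C₁.φ_local pl n _ _ (fun r hr => C₂.φ_local pl n σ σ' h r hr) q hq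
  lifting := by
    intro pl σ hσ x hx hcons
    obtain ⟨x₁, hx₁, hcons₁, hle₁, hd₁⟩ :=
      C₁.lifting pl (C₂.φ pl σ) (C₂.φ_strategy pl σ hσ) x hx hcons
    obtain ⟨x₂, hx₂, hcons₂, hle₂, hd₂⟩ := C₂.lifting pl σ hσ x₁ hx₁ hcons₁
    have hmapcomp : Play.map (fun p => C₁.π (C₂.π p)) x₂ = Play.map C₁.π (Play.map C₂.π x₂) := by
      cases x₂ with
      | fin p => rfl
      | inf y =>
        show Play.inf _ = Play.inf _
        rw [bodyMap_comp C₂.isTreeMap hx₂]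
    have hx₂T : ∀ p, x₂ = Play.fin p → C₂.π p ∈ T1.T := by
      rintro p rfl; exact C₂.π_maps p hx₂.1
    have hle : Play.le (Play.map (fun p => C₁.π (C₂.π p)) x₂) x := by
      rw [hmapcomp]
      refine Play.le_trans ?_ hle₁
      have : Play.map C₂.π x₂ = Play.map C₂.π x₂ := rfl
      refine Play.le_trans (play_map_mono C₁.isTreeMap ?_ hx₁ hle₂) (Play.le_refl _)
      intro q hq
      obtain ⟨p, hp, hgp⟩ := Play.map_eq_fin hq
      subst hp
      rw [← hgp]
      exact C₂.π_maps p hx₂.1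
    refine ⟨x₂, hx₂, hcons₂, hle, ?_⟩
    rcases hd₂ with hd₂ | hd₂
    · rcases hd₁ with hd₁ | hd₁
      · left; rw [hmapcomp, hd₂, hd₁]
      · -- x₁ is a taboo for pl in T1; pull back to T2
        cases x₁ with
        | inf y => exact absurd hd₁ (by simp [PlayTabooFor])
        | fin q =>
          obtain ⟨p, hp, hgp⟩ := Play.map_eq_fin hd₂
          subst hp
          right
          show p ∈ (if pl then T2.tabooI else T2.tabooII)
          have hq : q ∈ (if pl then T1.tabooI else T1.tabooII) := hd₁
          cases pl with
          | true => simp only [if_true] at *; exact C₂.π_tabooI p hx₂.1 (hgp ▸ hq)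
          | false => simp only [Bool.false_eq_true, if_false] at *; exact C₂.π_tabooII p hx₂.1 (hgp ▸ hq)
    · right; exact hd₂

theorem Covering.comp_isKCovering {T2 T1 T0 : TabooTree X}
    {C₂ : Covering T2 T1} {C₁ : Covering T1 T0} {k : ℕ}
    (h₂ : IsKCovering k C₂) (h₁ : IsKCovering k C₁) :
    IsKCovering k (C₂.comp C₁) := by
  obtain ⟨t2, i2, ii2, p2, f2⟩ := h₂
  obtain ⟨t1, i1, ii1, p1, f1⟩ := h₁
  refine ⟨fun p hp => (t2 p hp).trans (t1 p hp),
    fun p hp => (i2 p hp).trans (i1 p hp),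
    fun p hp => (ii2 p hp).trans (ii1 p hp),
    fun p hp hl => ?_, fun pl σ p hl => ?_⟩
  · show C₁.π (C₂.π p) = p
    rw [p2 p hp hl, p1 p ((t2 p hl).1 hp) hl]
  · show C₁.φ pl (C₂.φ pl σ) p = σ p
    rw [f1 pl _ p hl, f2 pl σ p hl]

end Plays

section InvLimit
set_option linter.unusedSectionVars false
attribute [local instance] Classical.propDecidable

variable {X : Type u} [Nonempty X]
variable (k : ℕ) (S : ℕ → TabooTree X) (C : ∀ n, Covering (S (n+1)) (S n))

/-- membership in the trees stabilizes -/
theorem memStable (hC : ∀ n, IsKCovering (k+n+1) (C n)) {p : List X} {m n : ℕ}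
    (hl : p.length ≤ k + m + 1) (hmn : m ≤ n) : p ∈ (S n).T ↔ p ∈ (S m).T := by
  induction n, hmn using Nat.le_induction with
  | base => rfl
  | succ n hmn ih =>
    rw [← ih]
    exact (hC n).1 p (by omega)

theorem tabooIStable (hC : ∀ n, IsKCovering (k+n+1) (C n)) {p : List X} {m n : ℕ}
    (hl : p.length ≤ k + m + 1) (hmn : m ≤ n) : p ∈ (S n).tabooI ↔ p ∈ (S m).tabooI := by
  induction n, hmn using Nat.le_induction with
  | base => rfl
  | succ n hmn ih =>
    rw [← ih]
    exact (hC n).2.1 p (by omega)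

theorem tabooIIStable (hC : ∀ n, IsKCovering (k+n+1) (C n)) {p : List X} {m n : ℕ}
    (hl : p.length ≤ k + m + 1) (hmn : m ≤ n) : p ∈ (S n).tabooII ↔ p ∈ (S m).tabooII := by
  induction n, hmn using Nat.le_induction with
  | base => rfl
  | succ n hmn ih =>
    rw [← ih]
    exact (hC n).2.2.1 p (by omega)

/-- the limit tree -/
def limT : Set (List X) := {p | p ∈ (S p.length).T}

def limI : Set (List X) := {p | p ∈ (S p.length).tabooI}

def limII : Set (List X) := {p | p ∈ (S p.length).tabooII}

theorem lim_mem_iff (hC : ∀ n, IsKCovering (k+n+1) (C n)) {p : List X} {n : ℕ}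
    (hl : p.length ≤ k + n + 1) : p ∈ limT S ↔ p ∈ (S n).T := by
  show p ∈ (S p.length).T ↔ _
  rcases Nat.le_total p.length n with h | h
  · exact (memStable k S C hC (by omega) h).symm
  · exact memStable k S C hC hl h

theorem lim_tabooI_iff (hC : ∀ n, IsKCovering (k+n+1) (C n)) {p : List X} {n : ℕ}
    (hl : p.length ≤ k + n + 1) : p ∈ limI S ↔ p ∈ (S n).tabooI := by
  show p ∈ (S p.length).tabooI ↔ _
  rcases Nat.le_total p.length n with h | h
  · exact (tabooIStable k S C hC (by omega) h).symm
  · exact tabooIStable k S C hC hl h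

theorem lim_tabooII_iff (hC : ∀ n, IsKCovering (k+n+1) (C n)) {p : List X} {n : ℕ}
    (hl : p.length ≤ k + n + 1) : p ∈ limII S ↔ p ∈ (S n).tabooII := by
  show p ∈ (S p.length).tabooII ↔ _
  rcases Nat.le_total p.length n with h | h
  · exact (tabooIIStable k S C hC (by omega) h).symm
  · exact tabooIIStable k S C hC hl h

theorem lim_terminal_iff (hC : ∀ n, IsKCovering (k+n+1) (C n)) {p : List X} {n : ℕ}
    (hl : p.length + 1 ≤ k + n + 1) :
    IsTerminal (limT S) p ↔ IsTerminal (S n).T p := by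
  unfold IsTerminal
  rw [lim_mem_iff k S C (n := n) hC (by omega)]
  refine and_congr_right fun _ => forall_congr' fun a => not_congr ?_
  exact lim_mem_iff k S C (p := p ++ [a]) (n := n) hC (by simp; omega)

theorem limT_isGameTree (hC : ∀ n, IsKCovering (k+n+1) (C n)) : IsGameTree (limT S) := by
  constructor
  · exact ⟨[], show [] ∈ (S 0).T from nil_mem_of_tree (S 0).isTree⟩
  · intro p q hq hpq
    have h1 : p ∈ (S q.length).T := (S q.length).isTree.2 hq hpq
    show p ∈ (S p.length).T
    rw [← memStable k S C hC (m := p.length) (by omega) hpq.length_le]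
    exact h1

/-- the limit taboo tree -/
def limTree (hC : ∀ n, IsKCovering (k+n+1) (C n)) : TabooTree X where
  T := limT S
  isTree := limT_isGameTree k S C hC
  tabooI := limI S
  tabooII := limII S
  tabooI_terminal := by
    intro p hp
    rw [lim_terminal_iff k S C hC (n := p.length) (by omega)]
    exact (S p.length).tabooI_terminal p hp
  tabooII_terminal := by
    intro p hp
    rw [lim_terminal_iff k S C hC (n := p.length) (by omega)]
    exact (S p.length).tabooII_terminal p hp
  taboo_disjoint := by
    rw [Set.disjoint_left]
    intro p hp hp2
    exact Set.disjoint_left.1 (S p.length).taboo_disjoint hp hp2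
  taboo_cover := by
    intro p hp
    have := (S (p.length)).taboo_cover p
      ((lim_terminal_iff k S C hC (n := p.length) (by omega)).1 hp)
    exact this

/-- projection from level `m+j` down to level `m` -/
def pdj (m : ℕ) : ℕ → List X → List X
  | 0, p => p
  | j+1, p => pdj m j ((C (m+j)).π p)

theorem pdj_zero (m : ℕ) (p : List X) : pdj S C m 0 p = p := rfl

theorem pdj_succ (m j : ℕ) (p : List X) :
    pdj S C m (j+1) p = pdj S C m j ((C (m+j)).π p) := rfl

theorem pdj_maps {m j : ℕ} {p : List X} (hp : p ∈ (S (m+j)).T) :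
    pdj S C m j p ∈ (S m).T := by
  induction j generalizing p with
  | zero => exact hp
  | succ j ih => exact ih ((C (m+j)).π_maps p hp)

theorem pdj_len {m j : ℕ} {p : List X} (hp : p ∈ (S (m+j)).T) :
    (pdj S C m j p).length = p.length := by
  induction j generalizing p with
  | zero => rfl
  | succ j ih =>
    rw [pdj_succ, ih ((C (m+j)).π_maps p hp), (C (m+j)).π_len p hp]

theorem pdj_mono {m j : ℕ} {p q : List X} (hp : p ∈ (S (m+j)).T) (hq : q ∈ (S (m+j)).T)
    (hpq : p <+: q) : pdj S C m j p <+: pdj S C m j q := by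
  induction j generalizing p q with
  | zero => exact hpq
  | succ j ih =>
    exact ih ((C (m+j)).π_maps p hp) ((C (m+j)).π_maps q hq) ((C (m+j)).π_mono p q hp hq hpq)

theorem pdj_tabooI {m j : ℕ} {p : List X} (hp : p ∈ (S (m+j)).T)
    (h : pdj S C m j p ∈ (S m).tabooI) : p ∈ (S (m+j)).tabooI := by
  induction j generalizing p with
  | zero => exact h
  | succ j ih => exact (C (m+j)).π_tabooI p hp (ih ((C (m+j)).π_maps p hp) h)

theorem pdj_tabooII {m j : ℕ} {p : List X} (hp : p ∈ (S (m+j)).T)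
    (h : pdj S C m j p ∈ (S m).tabooII) : p ∈ (S (m+j)).tabooII := by
  induction j generalizing p with
  | zero => exact h
  | succ j ih => exact (C (m+j)).π_tabooII p hp (ih ((C (m+j)).π_maps p hp) h)

theorem pdj_id (hC : ∀ n, IsKCovering (k+n+1) (C n)) {m j : ℕ} {p : List X}
    (hp : p ∈ limT S) (hl : p.length ≤ k) : pdj S C m j p = p := by
  induction j with
  | zero => rfl
  | succ j ih =>
    show pdj S C m j ((C (m+j)).π p) = p
    rw [(hC (m+j)).2.2.2.1 p ((lim_mem_iff k S C hC (by omega)).1 hp) (by omega), ih]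

theorem pdj_stab (hC : ∀ n, IsKCovering (k+n+1) (C n)) {m j : ℕ} {p : List X}
    (hp : p ∈ limT S) (hl : p.length ≤ m + j) : pdj S C m (j+1) p = pdj S C m j p := by
  show pdj S C m j ((C (m+j)).π p) = pdj S C m j p
  rw [(hC (m+j)).2.2.2.1 p ((lim_mem_iff k S C hC (by omega)).1 hp) (by omega)]

theorem pdj_stab' (hC : ∀ n, IsKCovering (k+n+1) (C n)) {m j j' : ℕ} {p : List X}
    (hp : p ∈ limT S) (hl : p.length ≤ m + j) (hj : j ≤ j') :
    pdj S C m j' p = pdj S C m j p := by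
  induction j', hj using Nat.le_induction with
  | base => rfl
  | succ j' hj ih =>
    rw [pdj_stab k S C hC hp (by omega), ih]

theorem pdj_comp {m j' : ℕ} (j : ℕ) (p : List X) :
    pdj S C m j' (pdj S C (m+j') j p) = pdj S C m (j + j') p := by
  induction j generalizing p with
  | zero => rw [Nat.zero_add]; rfl
  | succ j ih =>
    show pdj S C m j' (pdj S C (m+j') j ((C (m+j'+j)).π p)) = pdj S C m (j+1+j') p
    rw [ih]
    have h1 : j + 1 + j' = (j + j') + 1 := by omega
    rw [h1]
    show _ = pdj S C m (j+j') ((C (m + (j+j'))).π p)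
    have h2 : m + j' + j = m + (j + j') := by omega
    rw [h2]

/-- the limit projection to level `m` -/
def plim (m : ℕ) (p : List X) : List X := pdj S C m p.length p

theorem lim_mem_level {p : List X} (hC : ∀ n, IsKCovering (k+n+1) (C n))
    (hp : p ∈ limT S) (n : ℕ) (hn : p.length ≤ n) : p ∈ (S n).T :=
  (lim_mem_iff k S C hC (by omega)).1 hp

theorem plim_maps (hC : ∀ n, IsKCovering (k+n+1) (C n)) {m : ℕ} {p : List X}
    (hp : p ∈ limT S) : plim S C m p ∈ (S m).T :=
  pdj_maps S C (lim_mem_level k S C hC hp (m + p.length) (by omega))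

theorem plim_len (hC : ∀ n, IsKCovering (k+n+1) (C n)) {m : ℕ} {p : List X}
    (hp : p ∈ limT S) : (plim S C m p).length = p.length :=
  pdj_len S C (lim_mem_level k S C hC hp (m + p.length) (by omega))

theorem plim_mono (hC : ∀ n, IsKCovering (k+n+1) (C n)) {m : ℕ} {p q : List X}
    (hp : p ∈ limT S) (hq : q ∈ limT S) (hpq : p <+: q) :
    plim S C m p <+: plim S C m q := by
  have h1 : plim S C m p = pdj S C m q.length p :=
    (pdj_stab' k S C (m := m) (j := p.length) (j' := q.length) hC hp
      (by omega) hpq.length_le).symm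
  rw [h1]
  exact pdj_mono S C (lim_mem_level k S C hC hp (m + q.length)
      (by have := hpq.length_le; omega))
    (lim_mem_level k S C hC hq (m + q.length) (by omega)) hpq

theorem plim_treeMap (hC : ∀ n, IsKCovering (k+n+1) (C n)) (m : ℕ) :
    IsTreeMap (plim S C m) (limT S) (S m).T :=
  ⟨fun _ hp => plim_maps k S C hC hp, fun _ _ hp hq hpq => plim_mono k S C hC hp hq hpq,
   fun _ hp => plim_len k S C hC hp⟩

theorem plim_tabooI (hC : ∀ n, IsKCovering (k+n+1) (C n)) {m : ℕ} {p : List X}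
    (hp : p ∈ limT S) (h : plim S C m p ∈ (S m).tabooI) : p ∈ limI S := by
  have := pdj_tabooI S C (lim_mem_level k S C hC hp (m + p.length) (by omega)) h
  exact (lim_tabooI_iff k S C hC (n := m + p.length) (by omega)).2 this

theorem plim_tabooII (hC : ∀ n, IsKCovering (k+n+1) (C n)) {m : ℕ} {p : List X}
    (hp : p ∈ limT S) (h : plim S C m p ∈ (S m).tabooII) : p ∈ limII S := by
  have := pdj_tabooII S C (lim_mem_level k S C hC hp (m + p.length) (by omega)) h
  exact (lim_tabooII_iff k S C hC (n := m + p.length) (by omega)).2 this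

theorem plim_factor (hC : ∀ n, IsKCovering (k+n+1) (C n)) {n : ℕ} {p : List X}
    (hp : p ∈ limT S) : pdj S C 0 n (plim S C n p) = plim S C 0 p := by
  have h1 : pdj S C 0 n (pdj S C n p.length p) = pdj S C 0 (p.length + n) p := by
    have h := pdj_comp S C (m := 0) (j' := n) p.length p
    rw [show 0 + n = n by omega] at h
    exact h
  show pdj S C 0 n (pdj S C n p.length p) = pdj S C 0 p.length p
  rw [h1, pdj_stab' k S C (m := 0) (j := p.length) (j' := p.length + n) hC hp
    (by omega) (by omega)]

end InvLimit

section InvLimit2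
set_option linter.unusedSectionVars false
attribute [local instance] Classical.propDecidable

variable {X : Type u} [Nonempty X]

noncomputable def pick (s : Set X) : X :=
  if h : s.Nonempty then h.choose else Classical.arbitrary X

theorem pick_mem {s : Set X} (h : s.Nonempty) : pick s ∈ s := by
  rw [pick, dif_pos h]; exact h.choose_spec

variable (k : ℕ) (S : ℕ → TabooTree X) (C : ∀ n, Covering (S (n+1)) (S n))
variable (pl : Bool)

/-- the guard for the strategy correction -/
def fixGuard (n : ℕ) (σ τ : List X → X) (p : List X) : Prop :=
  k ≤ p.length ∧ p ∈ (S n).T ∧ ¬ IsTerminal (S n).T p ∧ Turn pl p.length ∧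
    PosConsistent pl τ p ∧ p ++ [σ p] ∉ (S n).T

/-- approximations to the corrected strategy -/
noncomputable def fixsAux (n : ℕ) (σ : List X → X) : ℕ → List X → X
  | 0, p => σ p
  | L+1, p =>
    if p.length = L then
      (if fixGuard k S pl n σ (fixsAux n σ L) p then pick {a | p ++ [a] ∈ (S n).T} else σ p)
    else fixsAux n σ L p

/-- the corrected strategy: legal wherever needed, equal to `σ` below level `k` -/
noncomputable def fixs (n : ℕ) (σ : List X → X) (p : List X) : X :=
  fixsAux k S pl n σ (p.length + 1) p

theorem fixsAux_stable {n : ℕ} {σ : List X → X} {p : List X} {L L' : ℕ}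
    (h1 : p.length < L) (h2 : L ≤ L') :
    fixsAux k S pl n σ L' p = fixsAux k S pl n σ L p := by
  induction L', h2 using Nat.le_induction with
  | base => rfl
  | succ L' h2 ih =>
    show (if p.length = L' then _ else fixsAux k S pl n σ L' p) = _
    rw [if_neg (by omega), ih]

theorem fixsAux_eq_fixs {n : ℕ} {σ : List X → X} {p : List X} {L : ℕ}
    (h : p.length < L) : fixsAux k S pl n σ L p = fixs k S pl n σ p :=
  fixsAux_stable k S pl (Nat.lt_succ_self p.length) (by omega)

theorem fixs_unfold (n : ℕ) (σ : List X → X) (p : List X) :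
    fixs k S pl n σ p =
      if fixGuard k S pl n σ (fixs k S pl n σ) p then pick {a | p ++ [a] ∈ (S n).T}
      else σ p := by
  show (if p.length = p.length then
      (if fixGuard k S pl n σ (fixsAux k S pl n σ p.length) p then _ else _) else _) = _
  rw [if_pos rfl]
  have hcong : fixGuard k S pl n σ (fixsAux k S pl n σ p.length) p ↔
      fixGuard k S pl n σ (fixs k S pl n σ) p := by
    unfold fixGuard
    refine and_congr_right fun _ => and_congr_right fun _ => and_congr_right fun _ =>
      and_congr_right fun _ => and_congr_left fun _ => ?_
    exact posConsistent_congr fun r hr => fixsAux_eq_fixs k S pl hr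
  exact if_congr hcong rfl rfl

theorem fixs_eq_low {n : ℕ} {σ : List X → X} {p : List X} (h : p.length < k) :
    fixs k S pl n σ p = σ p := by
  rw [fixs_unfold, if_neg]
  rintro ⟨h1, -⟩
  omega

theorem fixs_eq_of_legal {n : ℕ} {σ : List X → X} {p : List X}
    (h : p ++ [σ p] ∈ (S n).T) : fixs k S pl n σ p = σ p := by
  rw [fixs_unfold, if_neg]
  rintro ⟨-, -, -, -, -, h6⟩
  exact h6 h

theorem fixs_local {n N : ℕ} {σ σ' : List X → X}
    (hσ : ∀ r : List X, r.length < N → σ r = σ' r) :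
    ∀ p : List X, p.length < N → fixs k S pl n σ p = fixs k S pl n σ' p := by
  suffices H : ∀ L : ℕ, ∀ p : List X, p.length ≤ L → p.length < N →
      fixs k S pl n σ p = fixs k S pl n σ' p by
    intro p hp; exact H p.length p le_rfl hp
  intro L
  induction L using Nat.strong_induction_on with
  | _ L IH =>
    intro p hpL hpN
    rw [fixs_unfold, fixs_unfold]
    have hσp := hσ p hpN
    have hcons : PosConsistent pl (fixs k S pl n σ) p ↔
        PosConsistent pl (fixs k S pl n σ') p := by
      rcases Nat.eq_zero_or_pos p.length with h0 | h0
      · exact posConsistent_congr fun r hr => absurd hr (by omega)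
      · refine posConsistent_congr fun r hr => ?_
        exact IH r.length (by omega) r le_rfl (by omega)
    have hguard : fixGuard k S pl n σ (fixs k S pl n σ) p ↔
        fixGuard k S pl n σ' (fixs k S pl n σ') p := by
      unfold fixGuard
      rw [hσp]
      tauto
    rw [if_congr hguard rfl (by rw [hσp])]

theorem fixs_stab (hC : ∀ n, IsKCovering (k+n+1) (C n)) {n n' : ℕ} {σ : List X → X} :
    ∀ p : List X, p.length ≤ n → n ≤ n' → fixs k S pl n σ p = fixs k S pl n' σ p := by
  suffices H : ∀ L : ℕ, ∀ p : List X, p.length ≤ L → p.length ≤ n → n ≤ n' →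
      fixs k S pl n σ p = fixs k S pl n' σ p by
    intro p h1 h2; exact H p.length p le_rfl h1 h2
  intro L
  induction L using Nat.strong_induction_on with
  | _ L IH =>
    intro p hpL hpn hnn'
    rw [fixs_unfold, fixs_unfold]
    have hmem : p ∈ (S n).T ↔ p ∈ (S n').T :=
      (memStable k S C hC (by omega) hnn').symm
    have hmemx : ∀ a : X, p ++ [a] ∈ (S n).T ↔ p ++ [a] ∈ (S n').T := fun a =>
      (memStable k S C (p := p ++ [a]) hC (by simp; omega) hnn').symm
    have hterm : IsTerminal (S n).T p ↔ IsTerminal (S n').T p := by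
      unfold IsTerminal
      rw [hmem]
      exact and_congr_right fun _ => forall_congr' fun a => not_congr (hmemx a)
    have hcons : PosConsistent pl (fixs k S pl n σ) p ↔
        PosConsistent pl (fixs k S pl n' σ) p := by
      rcases Nat.eq_zero_or_pos p.length with h0 | h0
      · exact posConsistent_congr fun r hr => absurd hr (by omega)
      · exact posConsistent_congr fun r hr =>
          IH r.length (by omega) r le_rfl (by omega) hnn'
    have hset : {a | p ++ [a] ∈ (S n).T} = {a | p ++ [a] ∈ (S n').T} :=
      Set.ext fun a => hmemx a
    have hguard : fixGuard k S pl n σ (fixs k S pl n σ) p ↔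
        fixGuard k S pl n' σ (fixs k S pl n' σ) p := by
      unfold fixGuard
      rw [hmem]
      constructor
      · rintro ⟨a1,a2,a3,a4,a5,a6⟩
        exact ⟨a1,a2,(hterm.not).1 a3,a4,hcons.1 a5, fun hh => a6 ((hmemx _).2 hh)⟩
      · rintro ⟨a1,a2,a3,a4,a5,a6⟩
        exact ⟨a1,a2,(hterm.not).2 a3,a4,hcons.2 a5, fun hh => a6 ((hmemx _).1 hh)⟩
    rw [hset, if_congr hguard rfl rfl]

theorem nonterminal_ext {T : Set (List X)} {p : List X} (hp : p ∈ T)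
    (hnt : ¬ IsTerminal T p) : {a : X | p ++ [a] ∈ T}.Nonempty := by
  unfold IsTerminal at hnt
  push_neg at hnt
  exact hnt hp

theorem fixs_isStrategy (hC : ∀ n, IsKCovering (k+n+1) (C n)) {n : ℕ} {σ : List X → X}
    (hσ : IsStrategy (limT S) pl σ) : IsStrategy (S n).T pl (fixs k S pl n σ) := by
  intro p hp hnt ht hcons
  by_cases hk : p.length < k
  · rw [fixs_eq_low k S pl hk]
    have hpT : p ∈ limT S := (lim_mem_iff k S C hC (by omega)).2 hp
    have hntT : ¬ IsTerminal (limT S) p := by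
      rw [lim_terminal_iff k S C hC (n := n) (by omega)]; exact hnt
    have hconsσ : PosConsistent pl σ p :=
      (posConsistent_congr fun r hr => (fixs_eq_low k S pl (by omega)).symm).2 hcons
    have := hσ p hpT hntT ht hconsσ
    exact (lim_mem_iff k S C (p := p ++ [σ p]) hC (by simp; omega)).1 this
  · rw [fixs_unfold]
    by_cases hg : fixGuard k S pl n σ (fixs k S pl n σ) p
    · rw [if_pos hg]
      exact pick_mem (nonterminal_ext hp hnt)
    · rw [if_neg hg]
      by_contra hno
      exact hg ⟨by omega, hp, hnt, ht, hcons, hno⟩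

end InvLimit2

section InvLimit3
set_option linter.unusedSectionVars false
attribute [local instance] Classical.propDecidable

variable {X : Type u} [Nonempty X]
variable (k : ℕ) (S : ℕ → TabooTree X) (C : ∀ n, Covering (S (n+1)) (S n))
variable (pl : Bool)

/-- pushing a strategy down from level `m+j` to level `m` -/
noncomputable def psj (m : ℕ) : ℕ → (List X → X) → (List X → X)
  | 0, σ => σ
  | j+1, σ => psj m j ((C (m+j)).φ pl σ)

theorem psj_zero (m : ℕ) (σ : List X → X) : psj S C pl m 0 σ = σ := rfl

theorem psj_succ (m j : ℕ) (σ : List X → X) :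
    psj S C pl m (j+1) σ = psj S C pl m j ((C (m+j)).φ pl σ) := rfl

theorem psj_strategy {m j : ℕ} {σ : List X → X} (hσ : IsStrategy (S (m+j)).T pl σ) :
    IsStrategy (S m).T pl (psj S C pl m j σ) := by
  induction j generalizing σ with
  | zero => exact hσ
  | succ j ih => exact ih ((C (m+j)).φ_strategy pl σ hσ)

theorem psj_local {m j N : ℕ} {σ σ' : List X → X}
    (h : ∀ r : List X, r.length < N → σ r = σ' r) :
    ∀ q : List X, q.length < N → psj S C pl m j σ q = psj S C pl m j σ' q := by
  induction j generalizing σ σ' with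
  | zero => exact h
  | succ j ih =>
    intro q hq
    rw [psj_succ, psj_succ]
    exact ih (fun r hr => (C (m+j)).φ_local pl N σ σ' h r hr) q hq

theorem psj_id_below (hC : ∀ n, IsKCovering (k+n+1) (C n)) {m j : ℕ} {σ : List X → X}
    {q : List X} (hq : q.length < k + m + 1) : psj S C pl m j σ q = σ q := by
  induction j generalizing σ with
  | zero => rfl
  | succ j ih =>
    rw [psj_succ, ih]
    exact (hC (m+j)).2.2.2.2 pl σ q (by omega)

theorem psj_succ_left (m j : ℕ) (σ : List X → X) :
    psj S C pl m (j+1) σ = (C m).φ pl (psj S C pl (m+1) j σ) := by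
  induction j generalizing σ with
  | zero => rfl
  | succ j ih =>
    rw [psj_succ, ih]
    have hinner : psj S C pl (m+1) j ((C (m+(j+1))).φ pl σ) = psj S C pl (m+1) (j+1) σ := by
      rw [psj_succ]
      have h : m + 1 + j = m + (j + 1) := by omega
      rw [h]
    rw [hinner]

/-- the limit strategy pushed down to level `m` -/
noncomputable def limStrat (m : ℕ) (σ : List X → X) (q : List X) : X :=
  psj S C pl m (q.length + 1) (fixs k S pl (m + q.length + 1) σ) q

theorem limStrat_eq_psj (hC : ∀ n, IsKCovering (k+n+1) (C n)) {m j : ℕ} {σ : List X → X}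
    {q : List X} (hj : q.length + 1 ≤ j) :
    psj S C pl m j (fixs k S pl (m + j) σ) q = limStrat k S C pl m σ q := by
  induction j, hj using Nat.le_induction with
  | base => rfl
  | succ j hj ih =>
    rw [← ih]
    rw [psj_succ]
    refine psj_local S C pl (N := q.length + 1) (fun r hr => ?_) q (by omega)
    have h1 : (C (m+j)).φ pl (fixs k S pl (m + (j+1)) σ) r = fixs k S pl (m + (j+1)) σ r :=
      (hC (m+j)).2.2.2.2 pl _ r (by omega)
    rw [h1]
    exact (fixs_stab k S C pl hC r (by omega) (by omega)).symm

theorem limStrat_key (hC : ∀ n, IsKCovering (k+n+1) (C n)) (m : ℕ) (σ : List X → X) :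
    limStrat k S C pl m σ = (C m).φ pl (limStrat k S C pl (m+1) σ) := by
  funext q
  have h1 : (C m).φ pl (limStrat k S C pl (m+1) σ) q =
      (C m).φ pl (psj S C pl (m+1) (q.length+1) (fixs k S pl ((m+1) + (q.length+1)) σ)) q := by
    refine (C m).φ_local pl (q.length + 1) _ _ (fun r hr => ?_) q (by omega)
    exact (limStrat_eq_psj k S C pl (m := m+1) (j := q.length+1) (q := r) hC (by omega)).symm
  rw [h1, ← psj_succ_left]
  have h2 : m + 1 + (q.length + 1) = m + (q.length + 2) := by omega
  rw [h2]
  exact (limStrat_eq_psj k S C pl (m := m) (j := q.length + 2) (q := q) hC (by omega)).symm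

theorem limStrat_isStrategy (hC : ∀ n, IsKCovering (k+n+1) (C n)) {m : ℕ} {σ : List X → X}
    (hσ : IsStrategy (limT S) pl σ) : IsStrategy (S m).T pl (limStrat k S C pl m σ) := by
  intro q hq hnt ht hcons
  have hτ : IsStrategy (S m).T pl (psj S C pl m (q.length+1) (fixs k S pl (m + q.length + 1) σ)) :=
    psj_strategy S C pl (fixs_isStrategy k S C pl hC hσ)
  have hagree : ∀ r : List X, r.length < q.length →
      limStrat k S C pl m σ r = psj S C pl m (q.length+1) (fixs k S pl (m + q.length + 1) σ) r :=
    fun r hr => (limStrat_eq_psj k S C pl (m := m) (j := q.length + 1) (q := r) hC (by omega)).symm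
  have hcons' : PosConsistent pl (psj S C pl m (q.length+1) (fixs k S pl (m + q.length + 1) σ)) q :=
    (posConsistent_congr fun r hr => (hagree r hr).symm).2 hcons
  exact hτ q hq hnt ht hcons'

theorem limStrat_local {m N : ℕ} {σ σ' : List X → X}
    (h : ∀ r : List X, r.length < N → σ r = σ' r) {q : List X} (hq : q.length < N) :
    limStrat k S C pl m σ q = limStrat k S C pl m σ' q := by
  unfold limStrat
  have h1 : ∀ r : List X, r.length < N →
      fixs k S pl (m + q.length + 1) σ r = fixs k S pl (m + q.length + 1) σ' r :=
    fixs_local k S pl h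
  exact psj_local S C pl h1 q hq

theorem limStrat_id_below (hC : ∀ n, IsKCovering (k+n+1) (C n)) {σ : List X → X}
    {q : List X} (hq : q.length < k) : limStrat k S C pl 0 σ q = σ q := by
  unfold limStrat
  rw [psj_id_below k S C pl hC (by omega)]
  exact fixs_eq_low k S pl hq

theorem limStrat_indep (hC : ∀ n, IsKCovering (k+n+1) (C n)) {m m' : ℕ} {σ : List X → X}
    {q : List X} (h1 : q.length ≤ m) (h2 : m ≤ m') :
    limStrat k S C pl m σ q = limStrat k S C pl m' σ q := by
  unfold limStrat
  rw [psj_id_below k S C pl hC (by omega), psj_id_below k S C pl hC (by omega)]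
  exact fixs_stab k S C pl hC q (by omega) (by omega)

theorem limStrat_eq_sigma (hC : ∀ n, IsKCovering (k+n+1) (C n)) {m : ℕ} {σ : List X → X}
    (hσ : IsStrategy (limT S) pl σ) {q : List X} (hq : q ∈ limT S)
    (hnt : ¬ IsTerminal (limT S) q) (ht : Turn pl q.length) (hcons : PosConsistent pl σ q)
    (hm : q.length ≤ m) : limStrat k S C pl m σ q = σ q := by
  unfold limStrat
  rw [psj_id_below k S C pl hC (by omega)]
  apply fixs_eq_of_legal
  have := hσ q hq hnt ht hcons
  exact (lim_mem_iff k S C (p := q ++ [σ q]) hC (by simp; omega)).1 this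

end InvLimit3

section InvLimit4
set_option linter.unusedSectionVars false
attribute [local instance] Classical.propDecidable

variable {X : Type u} [Nonempty X]

theorem getD_prefixFn {y : ℕ → X} {l n : ℕ} (h : n < l) (d : X) :
    (prefixFn y l).getD n d = y n := by
  rw [List.getD_eq_getElem _ _ (by simp [length_prefixFn]; omega), getElem_prefixFn]

theorem bodyMap_id (y : ℕ → X) : bodyMap (fun p : List X => p) y = y := by
  funext n
  show (prefixFn y (n+1)).getD n _ = y n
  rw [getD_prefixFn (by omega)]

theorem le_fin_is_fin {g : List X → List X} {w : Play X} {p : List X}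
    (h : Play.le (Play.map g w) (Play.fin p)) : ∃ q, w = Play.fin q := by
  cases w with
  | fin q => exact ⟨q, rfl⟩
  | inf y => exact absurd h (by simp [Play.map, Play.le])

theorem antitone_nat_stab (f : ℕ → ℕ) (h : ∀ i, f (i+1) ≤ f i) :
    ∃ i₀, ∀ i, i₀ ≤ i → f i = f i₀ := by
  have hmono : ∀ i j, i ≤ j → f j ≤ f i := by
    intro i j hij
    induction j, hij using Nat.le_induction with
    | base => exact le_rfl
    | succ j hij ih => exact le_trans (h j) ih
  obtain ⟨i₀, hi₀⟩ := Nat.sInf_mem (⟨f 0, 0, rfl⟩ : (Set.range f).Nonempty)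
  refine ⟨i₀, fun i hi => le_antisymm (hmono i₀ i hi) ?_⟩
  rw [hi₀]
  exact Nat.sInf_le ⟨i, rfl⟩

variable (k : ℕ) (S : ℕ → TabooTree X) (C : ∀ n, Covering (S (n+1)) (S n))
variable (pl : Bool)

theorem bodyMap_pdj_zero (j : ℕ) (w : Play X) :
    Play.map (pdj S C j 0) w = w := by
  have hid : pdj S C j 0 = fun p : List X => p := funext fun p => rfl
  cases w with
  | fin p => rw [hid]; rfl
  | inf y => show Play.inf _ = _; rw [hid, bodyMap_id]

/-- the chain of lifted plays through the coverings -/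
noncomputable def liftChain (hC : ∀ n, IsKCovering (k+n+1) (C n)) (σ : List X → X)
    (hσ : IsStrategy (limT S) pl σ) (x : Play X) (hx : IsPlay (S 0).T x)
    (hcons : PlayConsistent pl (limStrat k S C pl 0 σ) x) :
    ∀ m : ℕ, {w : Play X // IsPlay (S m).T w ∧ PlayConsistent pl (limStrat k S C pl m σ) w}
  | 0 => ⟨x, hx, hcons⟩
  | m+1 =>
    let prev := liftChain hC σ hσ x hx hcons m
    let H := (C m).lifting pl (limStrat k S C pl (m+1) σ)
      (limStrat_isStrategy k S C pl hC hσ) prev.1 prev.2.1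
      (by rw [← limStrat_key k S C pl hC m σ]; exact prev.2.2)
    ⟨H.choose, H.choose_spec.1, H.choose_spec.2.1⟩

theorem liftChain_spec (hC : ∀ n, IsKCovering (k+n+1) (C n)) (σ : List X → X)
    (hσ : IsStrategy (limT S) pl σ) (x : Play X) (hx : IsPlay (S 0).T x)
    (hcons : PlayConsistent pl (limStrat k S C pl 0 σ) x) (m : ℕ) :
    Play.le (Play.map (C m).π (liftChain k S C pl hC σ hσ x hx hcons (m+1)).1)
      (liftChain k S C pl hC σ hσ x hx hcons m).1 ∧
    (Play.map (C m).π (liftChain k S C pl hC σ hσ x hx hcons (m+1)).1 =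
        (liftChain k S C pl hC σ hσ x hx hcons m).1 ∨
      PlayTabooFor (S (m+1)) pl (liftChain k S C pl hC σ hσ x hx hcons (m+1)).1) := by
  have h := ((C m).lifting pl (limStrat k S C pl (m+1) σ)
    (limStrat_isStrategy k S C pl hC hσ)
    (liftChain k S C pl hC σ hσ x hx hcons m).1
    (liftChain k S C pl hC σ hσ x hx hcons m).2.1
    (by rw [← limStrat_key k S C pl hC m σ];
        exact (liftChain k S C pl hC σ hσ x hx hcons m).2.2)).choose_spec
  exact ⟨h.2.2.1, h.2.2.2⟩

/-- positional consistency transfers from the level strategies to `σ` -/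
theorem posCons_lim (hC : ∀ n, IsKCovering (k+n+1) (C n)) {σ : List X → X}
    (hσ : IsStrategy (limT S) pl σ) {p : List X} (hp : p ∈ limT S)
    (h : ∀ m, p.length ≤ m → PosConsistent pl (limStrat k S C pl m σ) p) :
    PosConsistent pl σ p := by
  intro i
  induction i using Nat.strong_induction_on with
  | _ i IH =>
    intro hi ht
    have h1 : p.get ⟨i, hi⟩ = limStrat k S C pl p.length σ (p.take i) :=
      h p.length le_rfl i hi ht
    have hlen : (p.take i).length = i := by simp [List.length_take]; omega
    have h2 : limStrat k S C pl i σ (p.take i) = limStrat k S C pl p.length σ (p.take i) :=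
      limStrat_indep k S C pl hC (by omega) (by omega)
    have htake_mem : p.take i ∈ limT S :=
      (limT_isGameTree k S C hC).2 hp (List.take_prefix i p)
    have hnt : ¬ IsTerminal (limT S) (p.take i) :=
      not_terminal_of_proper (limT_isGameTree k S C hC) hp (List.take_prefix i p) (by omega)
    have hconsσ : PosConsistent pl σ (p.take i) := by
      intro j hj htj
      have hj' : j < i := by rw [hlen] at hj; exact hj
      have hget : (p.take i).get ⟨j, hj⟩ = p.get ⟨j, by omega⟩ := by
        simp [List.getElem_take]
      have htk : (p.take i).take j = p.take j := by
        rw [List.take_take]; congr 1; omega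
      rw [hget, htk]
      exact IH j hj' (by omega) htj
    have h3 : limStrat k S C pl i σ (p.take i) = σ (p.take i) := by
      exact limStrat_eq_sigma k S C pl (m := i) hC hσ htake_mem hnt (by rw [hlen]; exact ht)
        hconsσ (by omega)
    rw [h1, ← h2, h3]

end InvLimit4

section InvLimit5
set_option linter.unusedSectionVars false
attribute [local instance] Classical.propDecidable

variable {X : Type u} [Nonempty X]
variable (k : ℕ) (S : ℕ → TabooTree X) (C : ∀ n, Covering (S (n+1)) (S n))

theorem lim_lifting (hC : ∀ n, IsKCovering (k+n+1) (C n)) (pl : Bool) (σ : List X → X)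
    (hσ : IsStrategy (limT S) pl σ) (x : Play X) (hx : IsPlay (S 0).T x)
    (hcons : PlayConsistent pl (limStrat k S C pl 0 σ) x) :
    ∃ xt : Play X, IsPlay (limT S) xt ∧ PlayConsistent pl σ xt ∧
      Play.le (Play.map (plim S C 0) xt) x ∧
      (Play.map (plim S C 0) xt = x ∨
        PlayTabooFor (limTree k S C hC) pl xt) := by
  set xs : ℕ → Play X := fun m => (liftChain k S C pl hC σ hσ x hx hcons m).1 with hxs
  have hxs0 : xs 0 = x := rfl
  have hplay : ∀ m, IsPlay (S m).T (xs m) :=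
    fun m => (liftChain k S C pl hC σ hσ x hx hcons m).2.1
  have hconsm : ∀ m, PlayConsistent pl (limStrat k S C pl m σ) (xs m) :=
    fun m => (liftChain k S C pl hC σ hσ x hx hcons m).2.2
  have hspec : ∀ m, Play.le (Play.map (C m).π (xs (m+1))) (xs m) ∧
      (Play.map (C m).π (xs (m+1)) = xs m ∨ PlayTabooFor (S (m+1)) pl (xs (m+1))) :=
    fun m => liftChain_spec k S C pl hC σ hσ x hx hcons m
  -- a general transfer of `Play.le` down the chain
  have hlechain : ∀ i r, r ∈ (S i).T → Play.le (Play.fin r) (xs i) →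
      Play.le (Play.fin (pdj S C 0 i r)) (xs 0) := by
    intro i
    induction i with
    | zero => intro r hr h; exact h
    | succ i ih =>
      intro r hr h
      have h1 : Play.le (Play.map (C i).π (Play.fin r)) (Play.map (C i).π (xs (i+1))) :=
        play_map_mono (C i).isTreeMap
          (by rintro p hp; injection hp with hh; rw [← hh]; exact hr)
          (hplay (i+1)) h
      have h2 : Play.le (Play.fin ((C i).π r)) (xs i) := Play.le_trans h1 (hspec i).1
      have h3 := ih ((C i).π r) ((C i).π_maps r hr) h2
      have h4 : pdj S C 0 (i+1) r = pdj S C 0 i ((C (0+i)).π r) := rfl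
      rw [h4, Nat.zero_add]
      exact h3
  by_cases hA : ∃ m p, xs m = Play.fin p
  · -- CASE A : the chain is eventually a finite play
    obtain ⟨m₀, p₀, hm₀⟩ := hA
    have hfin : ∀ i, ∃ q, xs (m₀ + i) = Play.fin q := by
      intro i; induction i with
      | zero => exact ⟨p₀, hm₀⟩
      | succ i ih =>
        obtain ⟨q, hq⟩ := ih
        have h : Play.le (Play.map (C (m₀+i)).π (xs (m₀+i+1))) (Play.fin q) := by
          rw [← hq]; exact (hspec (m₀+i)).1
        obtain ⟨q', hq'⟩ := le_fin_is_fin h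
        exact ⟨q', hq'⟩
    choose q hq using hfin
    have hqT : ∀ i, q i ∈ (S (m₀+i)).T := by
      intro i
      have h1 : IsPlay (S (m₀+i)).T (Play.fin (q i)) := by rw [← hq i]; exact hplay _
      exact (h1 : IsTerminal _ _).1
    have hqpre : ∀ i, (C (m₀+i)).π (q (i+1)) <+: q i := by
      intro i
      have h : Play.le (Play.map (C (m₀+i)).π (Play.fin (q (i+1)))) (Play.fin (q i)) := by
        have e1 : xs (m₀+i+1) = Play.fin (q (i+1)) := hq (i+1)
        rw [← e1, ← hq i]; exact (hspec (m₀+i)).1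
      exact h
    have hqT' : ∀ i, q (i+1) ∈ (S (m₀+i+1)).T := fun i => hqT (i+1)
    have hlen : ∀ i, (q (i+1)).length ≤ (q i).length := by
      intro i
      have h1 := (hqpre i).length_le
      rwa [(C (m₀+i)).π_len _ (hqT' i)] at h1
    obtain ⟨i₀, hi₀⟩ := antitone_nat_stab (fun i => (q i).length) hlen
    set L := (q i₀).length with hL
    set i₁ := max i₀ L with hi₁
    have hstab : ∀ i, i₁ ≤ i → q i = q i₁ := by
      intro i hi
      induction i, hi using Nat.le_induction with
      | base => rfl
      | succ i hi ih =>
        have hlen1 : (q (i+1)).length = (q i).length := by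
          have e1 := hi₀ (i+1) (by omega)
          have e2 := hi₀ i (by omega)
          omega
        have heq2 : (C (m₀+i)).π (q (i+1)) = q i := by
          apply List.IsPrefix.eq_of_length (hqpre i)
          rw [(C (m₀+i)).π_len _ (hqT' i), hlen1]
        have hlL : (q (i+1)).length = L := by
          have e1 := hi₀ (i+1) (by omega)
          omega
        have hid : (C (m₀+i)).π (q (i+1)) = q (i+1) := by
          apply (hC (m₀+i)).2.2.2.1 _ (hqT' i)
          omega
        rw [← ih, ← heq2, hid]
    set ps := q i₁ with hps
    have hpsL : ps.length = L := by
      have := hi₀ i₁ (by omega)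
      simpa using this
    have hbig : ∀ M, m₀ + i₁ ≤ M → xs M = Play.fin ps := by
      intro M hM
      have hM' : M = m₀ + (M - m₀) := by omega
      rw [hM', hq (M - m₀), hstab (M - m₀) (by omega)]
    -- membership and terminality in the limit tree
    have hfinplay : IsPlay (S (m₀+i₁)).T (Play.fin ps) := by
      rw [← hbig (m₀+i₁) le_rfl]; exact hplay _
    have hterm : IsTerminal (S (m₀+i₁)).T ps := hfinplay
    have hpsT : ps ∈ limT S :=
      (lim_mem_iff k S C (n := m₀+i₁) hC (by omega)).2 hterm.1
    have hpsTerm : IsTerminal (limT S) ps := by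
      rw [lim_terminal_iff k S C (n := m₀+i₁) hC (by omega)]
      exact hterm
    -- consistency with σ
    have hpscons : PosConsistent pl σ ps := by
      apply posCons_lim k S C pl hC hσ hpsT
      intro m hm
      have h1 : PlayConsistent pl (limStrat k S C pl (max m (m₀+i₁)) σ) (Play.fin ps) := by
        rw [← hbig (max m (m₀+i₁)) (by omega)]; exact hconsm _
      have h1' : PosConsistent pl (limStrat k S C pl (max m (m₀+i₁)) σ) ps := h1
      refine (posConsistent_congr fun r hr => ?_).2 h1'
      exact limStrat_indep k S C pl hC (by omega) (by omega)
    -- the `le` part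
    have hmemM : ps ∈ (S (m₀+i₁+ps.length)).T :=
      lim_mem_level k S C hC hpsT _ (by omega)
    have hle0 : Play.le (Play.fin (pdj S C 0 (m₀+i₁+ps.length) ps)) (xs 0) := by
      apply hlechain (m₀+i₁+ps.length) ps hmemM
      rw [hbig _ (by omega)]
      exact Play.le_refl _
    have h3 : pdj S C 0 (m₀+i₁+ps.length) ps = plim S C 0 ps :=
      pdj_stab' k S C (m := 0) (j := ps.length) (j' := m₀+i₁+ps.length) hC hpsT
        (by omega) (by omega)
    have hle : Play.le (Play.map (plim S C 0) (Play.fin ps)) x := by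
      show Play.le (Play.fin (plim S C 0 ps)) x
      rw [← h3, ← hxs0]
      exact hle0
    refine ⟨Play.fin ps, hpsTerm, hpscons, hle, ?_⟩
    by_cases hTab : ∃ m, PlayTabooFor (S m) pl (xs m)
    · -- the taboo case
      obtain ⟨mt, hmt⟩ := hTab
      have htb : ∀ m, mt ≤ m → PlayTabooFor (S m) pl (xs m) := by
        intro m hm
        induction m, hm using Nat.le_induction with
        | base => exact hmt
        | succ m hm ih =>
          cases hxm : xs m with
          | inf y => rw [hxm] at ih; exact absurd ih (by simp [PlayTabooFor])
          | fin r =>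
            have hle2 : Play.le (Play.map (C m).π (xs (m+1))) (Play.fin r) := by
              rw [← hxm]; exact (hspec m).1
            obtain ⟨r', hr'⟩ := le_fin_is_fin hle2
            rcases (hspec m).2 with heq | htb'
            · rw [hr', hxm] at heq
              have hπ : (C m).π r' = r := by
                have : Play.fin ((C m).π r') = Play.fin r := heq
                injection this
              have hr'T : r' ∈ (S (m+1)).T := by
                have h1 : IsPlay (S (m+1)).T (Play.fin r') := by rw [← hr']; exact hplay _
                exact (h1 : IsTerminal _ _).1
              rw [hxm] at ih
              rw [hr']
              show r' ∈ (if pl then (S (m+1)).tabooI else (S (m+1)).tabooII)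
              have ihr : r ∈ (if pl then (S m).tabooI else (S m).tabooII) := ih
              cases pl with
              | true =>
                simp only [if_true] at ihr ⊢
                exact (C m).π_tabooI r' hr'T (hπ ▸ ihr)
              | false =>
                simp only [Bool.false_eq_true, if_false] at ihr ⊢
                exact (C m).π_tabooII r' hr'T (hπ ▸ ihr)
            · exact htb'
      right
      have h1 : PlayTabooFor (S (max mt (m₀+i₁))) pl (Play.fin ps) := by
        rw [← hbig (max mt (m₀+i₁)) (by omega)]
        exact htb _ (by omega)
      have h1' : ps ∈ (if pl then (S (max mt (m₀+i₁))).tabooI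
          else (S (max mt (m₀+i₁))).tabooII) := h1
      show ps ∈ (if pl then (limTree k S C hC).tabooI else (limTree k S C hC).tabooII)
      cases pl with
      | true =>
        simp only [if_true] at h1' ⊢
        show ps ∈ limI S
        exact (lim_tabooI_iff k S C (n := max mt (m₀+i₁)) hC (by omega)).2 h1'
      | false =>
        simp only [Bool.false_eq_true, if_false] at h1' ⊢
        show ps ∈ limII S
        exact (lim_tabooII_iff k S C (n := max mt (m₀+i₁)) hC (by omega)).2 h1'
    · -- no taboo: the chain consists of exact lifts
      left
      have heqall : ∀ m, Play.map (C m).π (xs (m+1)) = xs m := by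
        intro m
        rcases (hspec m).2 with h | h
        · exact h
        · exact absurd ⟨m+1, h⟩ hTab
      have hmap : ∀ i, Play.map (pdj S C 0 i) (xs i) = xs 0 := by
        intro i
        induction i with
        | zero => exact bodyMap_pdj_zero S C 0 (xs 0)
        | succ i ih =>
          have hfun : pdj S C 0 (i+1) = fun p : List X => pdj S C 0 i ((C i).π p) := by
            funext p
            show pdj S C 0 i ((C (0+i)).π p) = _
            rw [Nat.zero_add]
          have hcomp : Play.map (pdj S C 0 (i+1)) (xs (i+1)) =
              Play.map (pdj S C 0 i) (Play.map (C i).π (xs (i+1))) := by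
            cases hxx : xs (i+1) with
            | fin p => rw [hfun]; rfl
            | inf y =>
              have hy : y ∈ body (S (i+1)).T := by
                have h1 : IsPlay (S (i+1)).T (Play.inf y) := by rw [← hxx]; exact hplay _
                exact h1
              show Play.inf _ = Play.inf _
              rw [hfun, bodyMap_comp (C i).isTreeMap hy]
          rw [hcomp, heqall i, ih]
      have h2 := hmap (m₀+i₁+ps.length)
      rw [hbig _ (by omega)] at h2
      show Play.fin (plim S C 0 ps) = x
      rw [← h3, ← hxs0]
      exact h2
  · -- CASE B : all plays in the chain are infinite
    have hinf : ∀ m, ∃ y, xs m = Play.inf y := by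
      intro m; cases hxm : xs m with
      | fin p => exact absurd ⟨m, p, hxm⟩ hA
      | inf y => exact ⟨y, rfl⟩
    choose y hy using hinf
    have hyb : ∀ m, y m ∈ body (S m).T := by
      intro m
      have h1 : IsPlay (S m).T (Play.inf (y m)) := by rw [← hy m]; exact hplay m
      exact h1
    have hconsy : ∀ m, BranchConsistent pl (limStrat k S C pl m σ) (y m) := by
      intro m
      have h1 : PlayConsistent pl (limStrat k S C pl m σ) (Play.inf (y m)) := by
        rw [← hy m]; exact hconsm m
      exact h1
    have heq : ∀ m, bodyMap (C m).π (y (m+1)) = y m := by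
      intro m
      have h := (hspec m).1
      rw [hy m, hy (m+1)] at h
      exact h
    have hstep : ∀ m n, n ≤ k + m → y m n = y (m+1) n := by
      intro m n hn
      rw [← heq m]
      show bodyMap (C m).π (y (m+1)) n = _
      unfold bodyMap
      rw [(hC m).2.2.2.1 (prefixFn (y (m+1)) (n+1)) (hyb (m+1) (n+1))
        (by rw [length_prefixFn]; omega)]
      rw [getD_prefixFn (by omega)]
    have hstab2 : ∀ n m m', n ≤ m → m ≤ m' → y m n = y m' n := by
      intro n m m' hnm hmm'
      induction m', hmm' using Nat.le_induction with
      | base => rfl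
      | succ m' hmm' ih => rw [ih, hstep m' n (by omega)]
    set yt : ℕ → X := fun n => y n n with hytdef
    have hytm : ∀ m n, n ≤ m → y m n = yt n := fun m n h => (hstab2 n n m le_rfl h).symm
    have hpre : ∀ m l, l ≤ m → prefixFn (y m) l = prefixFn yt l := by
      intro m l hlm
      apply List.ext_getElem (by simp [length_prefixFn])
      intro i h1 h2
      rw [getElem_prefixFn, getElem_prefixFn]
      exact hytm m i (by simp [length_prefixFn] at h1; omega)
    have hytb : yt ∈ body (limT S) := by
      intro l
      show prefixFn yt l ∈ (S (prefixFn yt l).length).T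
      rw [length_prefixFn, ← hpre l l le_rfl]
      exact hyb l l
    have hytcons : BranchConsistent pl σ yt := by
      intro n
      induction n using Nat.strong_induction_on with
      | _ n IH =>
        intro ht
        have h1 : y (n+1) n = limStrat k S C pl (n+1) σ (prefixFn (y (n+1)) n) :=
          hconsy (n+1) n ht
        rw [hytm (n+1) n (by omega), hpre (n+1) n (by omega)] at h1
        rw [h1]
        apply limStrat_eq_sigma k S C pl (m := n+1) hC hσ (hytb n)
          (prefixFn_not_terminal (limT_isGameTree k S C hC) hytb n)
        · rw [length_prefixFn]; exact ht
        · intro j hj htj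
          rw [length_prefixFn] at hj
          have hg : (prefixFn yt n).get ⟨j, by simp [length_prefixFn]; omega⟩ = yt j :=
            get_prefixFn yt hj
          have htk : (prefixFn yt n).take j = prefixFn yt j := take_prefixFn yt (by omega)
          rw [hg, htk]
          exact IH j (by omega) htj
        · rw [length_prefixFn]; omega
    have hpdjpre : ∀ j l, pdj S C 0 j (prefixFn (y j) l) = prefixFn (y 0) l := by
      intro j
      induction j with
      | zero => intro l; rfl
      | succ j ih =>
        intro l
        have hr : pdj S C 0 (j+1) (prefixFn (y (j+1)) l) =
            pdj S C 0 j ((C (0+j)).π (prefixFn (y (j+1)) l)) := rfl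
        rw [hr, Nat.zero_add,
          show (C j).π (prefixFn (y (j+1)) l) = prefixFn (bodyMap (C j).π (y (j+1))) l from
            (prefixFn_bodyMap (C j).isTreeMap (hyb (j+1)) l).symm,
          heq j]
        exact ih l
    have hbm : bodyMap (plim S C 0) yt = y 0 := by
      funext n
      show (plim S C 0 (prefixFn yt (n+1))).getD n _ = y 0 n
      have h1 : plim S C 0 (prefixFn yt (n+1)) = pdj S C 0 (n+1) (prefixFn yt (n+1)) := by
        show pdj S C 0 (prefixFn yt (n+1)).length _ = _
        rw [length_prefixFn]
      rw [h1, ← hpre (n+1) (n+1) le_rfl, hpdjpre (n+1) (n+1)]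
      exact getD_prefixFn (by omega) _
    have hmain : Play.map (plim S C 0) (Play.inf yt) = x := by
      show Play.inf (bodyMap (plim S C 0) yt) = x
      rw [hbm, ← hy 0]
      exact hxs0
    refine ⟨Play.inf yt, hytb, hytcons, ?_, Or.inl hmain⟩
    rw [hmain]
    exact Play.le_refl x

end InvLimit5

section InvLimit6
set_option linter.unusedSectionVars false
attribute [local instance] Classical.propDecidable

variable {X : Type u} [Nonempty X]
variable (k : ℕ) (S : ℕ → TabooTree X) (C : ∀ n, Covering (S (n+1)) (S n))

/-- the limit covering -/
noncomputable def limCov (hC : ∀ n, IsKCovering (k+n+1) (C n)) :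
    Covering (limTree k S C hC) (S 0) where
  π := plim S C 0
  π_maps := fun p hp => plim_maps k S C hC hp
  π_mono := fun p q hp hq hpq => plim_mono k S C hC hp hq hpq
  π_len := fun p hp => plim_len k S C hC hp
  π_tabooI := fun p hp h => plim_tabooI k S C hC hp h
  π_tabooII := fun p hp h => plim_tabooII k S C hC hp h
  φ := fun pl σ => limStrat k S C pl 0 σ
  φ_strategy := fun pl σ h => limStrat_isStrategy k S C pl hC h
  φ_local := fun pl n σ σ' h q hq => limStrat_local k S C pl h hq
  lifting := fun pl σ hσ x hx hcons => lim_lifting k S C hC pl σ hσ x hx hcons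

theorem limCov_isKCovering (hC : ∀ n, IsKCovering (k+n+1) (C n)) :
    IsKCovering k (limCov k S C hC) := by
  refine ⟨fun p hp => lim_mem_iff k S C (n := 0) hC (by omega),
    fun p hp => lim_tabooI_iff k S C (n := 0) hC (by omega),
    fun p hp => lim_tabooII_iff k S C (n := 0) hC (by omega),
    fun p hp hl => pdj_id k S C hC hp hl,
    fun pl σ p hl => limStrat_id_below k S C pl hC hl⟩

theorem lim_bodyMap_factor (hC : ∀ n, IsKCovering (k+n+1) (C n)) (n : ℕ) {y : ℕ → X}
    (hy : y ∈ body (limT S)) :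
    bodyMap (pdj S C 0 (n+1)) (bodyMap (plim S C (n+1)) y) = bodyMap (plim S C 0) y := by
  funext j
  show (pdj S C 0 (n+1) (prefixFn (bodyMap (plim S C (n+1)) y) (j+1))).getD j _ =
    (plim S C 0 (prefixFn y (j+1))).getD j _
  rw [prefixFn_bodyMap (plim_treeMap k S C hC (n+1)) hy,
    plim_factor k S C hC (hy (j+1))]

theorem lim_relclopen (hC : ∀ n, IsKCovering (k+n+1) (C n)) (n : ℕ) (E : Set (ℕ → X))
    (h : RelClopen (S (n+1)).T (bodyMap (pdj S C 0 (n+1)) ⁻¹' E ∩ body (S (n+1)).T)) :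
    RelClopen (limT S) (bodyMap (plim S C 0) ⁻¹' E ∩ body (limT S)) := by
  have hpull := relClopen_pullback (plim_treeMap k S C hC (n+1)) h
  have hset : bodyMap (plim S C 0) ⁻¹' E ∩ body (limT S) =
      bodyMap (plim S C (n+1)) ⁻¹'
        (bodyMap (pdj S C 0 (n+1)) ⁻¹' E ∩ body (S (n+1)).T) ∩ body (limT S) := by
    ext y
    simp only [Set.mem_inter_iff, Set.mem_preimage]
    constructor
    · rintro ⟨h1, h2⟩
      refine ⟨⟨?_, bodyMap_mem_body (plim_treeMap k S C hC (n+1)) h2⟩, h2⟩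
      rw [lim_bodyMap_factor k S C hC n h2]
      exact h1
    · rintro ⟨⟨h1, _⟩, h2⟩
      rw [lim_bodyMap_factor k S C hC n h2] at h1
      exact ⟨h1, h2⟩
  rw [hset]
  exact hpull

theorem invLimit_exists (hC : ∀ n, IsKCovering (k+n+1) (C n)) :
    ∃ (Tw : TabooTree X) (Cw : Covering Tw (S 0)),
      IsKCovering k Cw ∧
      (∀ (n : ℕ) (E : Set (ℕ → X)),
        RelClopen (S (n+1)).T (bodyMap (pdj S C 0 (n+1)) ⁻¹' E ∩ body (S (n+1)).T) →
        RelClopen Tw.T (bodyMap Cw.π ⁻¹' E ∩ body Tw.T)) :=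
  ⟨limTree k S C hC, limCov k S C hC, limCov_isKCovering k S C hC,
    fun n E h => lim_relclopen k S C hC n E h⟩

end InvLimit6

section Chain
set_option linter.unusedSectionVars false

variable {X : Type u} [Nonempty X]
variable (k : ℕ) (M : TabooTree X) (f : ℕ → Set (ℕ → X))
variable (step : ∀ (n : ℕ) (Sn : TabooTree X) (pr : List X → List X),
  ∃ (St : TabooTree X) (Cc : Covering St Sn), IsKCovering (k+n+1) Cc ∧
    Unravels Cc (bodyMap pr ⁻¹' (f n)ᶜ ∩ body Sn.T))

noncomputable def chainD : ℕ → Σ' (St : TabooTree X), (List X → List X)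
  | 0 => ⟨M, fun p => p⟩
  | n+1 =>
    ⟨(step n (chainD n).1 (chainD n).2).choose,
     fun p => (chainD n).2 ((step n (chainD n).1 (chainD n).2).choose_spec.choose.π p)⟩

noncomputable def chainS (n : ℕ) : TabooTree X := (chainD k M f step n).1
noncomputable def chainPr (n : ℕ) : List X → List X := (chainD k M f step n).2
noncomputable def chainC (n : ℕ) :
    Covering (chainS k M f step (n+1)) (chainS k M f step n) :=
  (step n (chainS k M f step n) (chainPr k M f step n)).choose_spec.choose

theorem chainC_spec (n : ℕ) : IsKCovering (k+n+1) (chainC k M f step n) ∧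
    Unravels (chainC k M f step n)
      (bodyMap (chainPr k M f step n) ⁻¹' (f n)ᶜ ∩ body (chainS k M f step n).T) :=
  (step n (chainS k M f step n) (chainPr k M f step n)).choose_spec.choose_spec

theorem chainS_zero : chainS k M f step 0 = M := rfl

theorem chainPr_succ (n : ℕ) : chainPr k M f step (n+1) =
    fun p => chainPr k M f step n ((chainC k M f step n).π p) := rfl

theorem chainPr_eq_pdj (n : ℕ) :
    chainPr k M f step n = pdj (chainS k M f step) (chainC k M f step) 0 n := by
  induction n with
  | zero => funext p; rfl
  | succ n ih =>
    funext p
    show chainPr k M f step n ((chainC k M f step n).π p) = _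
    rw [show pdj (chainS k M f step) (chainC k M f step) 0 (n+1) p =
      pdj (chainS k M f step) (chainC k M f step) 0 n
        ((chainC k M f step (0+n)).π p) from rfl, Nat.zero_add, ih]

end Chain


/-- the successor step of the induction: if every set of class `Σ⁰_β`
(`1 ≤ β < α`) in the branch space of any game tree with taboos can be unraveled by a
`k`-covering for every `k`, and likewise every open set can be so unraveled, then every
set of class `Σ⁰_α` in the branch space of any game tree with taboos can be unraveled by
a `k`-covering, for every `k`. -/
theorem stmt11 {X : Type*} [Nonempty X] (α : Ordinal.{0}) (hα : 1 ≤ α)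
    (ih : ∀ β : Ordinal.{0}, 1 ≤ β → β < α →
      ∀ (S : TabooTree X) (A : Set (ℕ → X)), A ⊆ body S.T →
        (∃ B, SigmaMem X β B ∧ A = B ∩ body S.T) →
        ∀ k : ℕ, ∃ (St : TabooTree X) (C : Covering St S), IsKCovering k C ∧ Unravels C A)
    (hopen : ∀ (S : TabooTree X) (A : Set (ℕ → X)), A ⊆ body S.T → RelOpen S.T A →
      ∀ k : ℕ, ∃ (St : TabooTree X) (C : Covering St S), IsKCovering k C ∧ Unravels C A)
    (M : TabooTree X) (A : Set (ℕ → X)) (hA : A ⊆ body M.T)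
    (hsig : ∃ B, SigmaMem X α B ∧ A = B ∩ body M.T) (k : ℕ) :
    ∃ (Tc : TabooTree X) (C : Covering Tc M), IsKCovering k C ∧ Unravels C A := by
  obtain ⟨B, hB, hAB⟩ := hsig
  cases hB with
  | isOpen o B hBopen =>
    exact hopen M A hA ⟨B, hBopen, hAB⟩ k
  | iUnion o f β h1 h2 h3 =>
    have step : ∀ (n : ℕ) (Sn : TabooTree X) (pr : List X → List X),
        ∃ (St : TabooTree X) (Cc : Covering St Sn), IsKCovering (k+n+1) Cc ∧
          Unravels Cc (bodyMap pr ⁻¹' (f n)ᶜ ∩ body Sn.T) := by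
      intro n Sn pr
      exact ih (β n) (h1 n) (h2 n) Sn (bodyMap pr ⁻¹' (f n)ᶜ ∩ body Sn.T)
        Set.inter_subset_right
        ⟨bodyMap pr ⁻¹' (f n)ᶜ, SigmaMem.preimage (continuous_bodyMap pr) (h3 n), rfl⟩
        (k+n+1)
    have hC' : ∀ n, IsKCovering (k+n+1) (chainC k M f step n) :=
      fun n => (chainC_spec k M f step n).1
    obtain ⟨Tw, Cw, hKC, hclop⟩ :=
      invLimit_exists k (chainS k M f step) (chainC k M f step) hC'
    -- each pullback of `f n` is relatively clopen in the limit tree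
    have hUnrav : ∀ n, RelClopen Tw.T (bodyMap Cw.π ⁻¹' (f n) ∩ body Tw.T) := by
      intro n
      apply hclop n (f n)
      have hunr := (chainC_spec k M f step n).2
      have hfact : ∀ y ∈ body (chainS k M f step (n+1)).T,
          bodyMap (pdj (chainS k M f step) (chainC k M f step) 0 (n+1)) y =
            bodyMap (chainPr k M f step n) (bodyMap (chainC k M f step n).π y) := by
        intro y hy
        rw [← chainPr_eq_pdj k M f step (n+1), chainPr_succ k M f step n,
          bodyMap_comp (chainC k M f step n).isTreeMap hy]
      have hsetc : bodyMap (chainC k M f step n).π ⁻¹'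
            (bodyMap (chainPr k M f step n) ⁻¹' (f n)ᶜ ∩ body (chainS k M f step n).T) ∩
            body (chainS k M f step (n+1)).T =
          bodyMap (pdj (chainS k M f step) (chainC k M f step) 0 (n+1)) ⁻¹' (f n)ᶜ ∩
            body (chainS k M f step (n+1)).T := by
        ext y
        simp only [Set.mem_inter_iff, Set.mem_preimage]
        constructor
        · rintro ⟨⟨hy1, _⟩, hy3⟩
          refine ⟨?_, hy3⟩
          rw [hfact y hy3]
          exact hy1
        · rintro ⟨hy1, hy3⟩
          refine ⟨⟨?_, bodyMap_mem_body (chainC k M f step n).isTreeMap hy3⟩, hy3⟩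
          rw [← hfact y hy3]
          exact hy1
      have hcl1 : RelClopen (chainS k M f step (n+1)).T
          (bodyMap (pdj (chainS k M f step) (chainC k M f step) 0 (n+1)) ⁻¹' (f n)ᶜ ∩
            body (chainS k M f step (n+1)).T) := by
        rw [← hsetc]; exact hunr
      have hcl2 := hcl1.diff
      have hdiff : body (chainS k M f step (n+1)).T \
            (bodyMap (pdj (chainS k M f step) (chainC k M f step) 0 (n+1)) ⁻¹' (f n)ᶜ ∩
              body (chainS k M f step (n+1)).T) =
          bodyMap (pdj (chainS k M f step) (chainC k M f step) 0 (n+1)) ⁻¹' (f n) ∩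
            body (chainS k M f step (n+1)).T := by
        ext y
        simp only [Set.mem_diff, Set.mem_inter_iff, Set.mem_preimage, Set.mem_compl_iff]
        tauto
      rw [hdiff] at hcl2
      exact hcl2
    -- the pullback of A to the limit tree is relatively open
    have hAw : bodyMap Cw.π ⁻¹' A ∩ body Tw.T =
        ⋃ n, (bodyMap Cw.π ⁻¹' (f n) ∩ body Tw.T) := by
      ext y
      simp only [hAB, Set.mem_inter_iff, Set.mem_preimage, Set.mem_iUnion]
      constructor
      · rintro ⟨⟨h1, _⟩, h3⟩
        obtain ⟨n, hn⟩ := h1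
        exact ⟨n, hn, h3⟩
      · rintro ⟨n, hn, h3⟩
        exact ⟨⟨⟨n, hn⟩, bodyMap_mem_body Cw.isTreeMap h3⟩, h3⟩
    have hopenA : RelOpen Tw.T (bodyMap Cw.π ⁻¹' A ∩ body Tw.T) := by
      choose U hU hUeq using fun n => (hUnrav n).1
      refine ⟨⋃ n, U n, ?_, ?_⟩
      · exact @isOpen_iUnion _ _ (treeTopology X) _ hU
      · rw [hAw, Set.iUnion_inter]
        exact Set.iUnion_congr hUeq
    obtain ⟨T2, C2, hK2, hU2⟩ := hopen Tw (bodyMap Cw.π ⁻¹' A ∩ body Tw.T)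
      Set.inter_subset_right hopenA k
    refine ⟨T2, C2.comp Cw, Covering.comp_isKCovering hK2 hKC, ?_⟩
    show RelClopen T2.T (bodyMap (fun p => Cw.π (C2.π p)) ⁻¹' A ∩ body T2.T)
    have hsetf : bodyMap C2.π ⁻¹' (bodyMap Cw.π ⁻¹' A ∩ body Tw.T) ∩ body T2.T =
        bodyMap (fun p => Cw.π (C2.π p)) ⁻¹' A ∩ body T2.T := by
      ext y
      simp only [Set.mem_inter_iff, Set.mem_preimage]
      constructor
      · rintro ⟨⟨hy1, _⟩, hy3⟩
        refine ⟨?_, hy3⟩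
        rw [bodyMap_comp C2.isTreeMap hy3]
        exact hy1
      · rintro ⟨hy1, hy3⟩
        rw [bodyMap_comp C2.isTreeMap hy3] at hy1
        exact ⟨⟨hy1, bodyMap_mem_body C2.isTreeMap hy3⟩, hy3⟩
    rw [← hsetf]
    exact hU2
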